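/- Let P and Q be polynomial functions on the real vector space of J-invariant symmetric bilinear forms h on ℝ^m (together with the auxiliary variable det(h)^{-1}, defined on the open set where det(h) ≠ 0) and additional free real variables. If P = Q on the set where h is positive definite, then P = Q on the entire set where det(h) ≠ 0; in particular P = Q for h of any nondegenerate signature. -/

import Mathlib

open Matrix

/-- The standard complex structure `J e_i = e_{i+m̄}`, `J e_{i+m̄} = -e_i` as a matrix. -/
def Jstd (m : ℕ) : Matrix (Fin (m + m)) (Fin (m + m)) ℝ :=
  Matrix.of fun i j =>
    if i.val = j.val + m then 1 else if j.val = i.val + m then -1 else 0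

lemma Jstd_transpose (m : ℕ) : (Jstd m)ᵀ = -Jstd m := by
  ext i j
  simp only [transpose_apply, Jstd, Matrix.of_apply, Matrix.neg_apply]
  split_ifs with h1 h2 h2 <;> first | ring1 | omega

lemma Jstd_mul_self (m : ℕ) : Jstd m * Jstd m = -1 := by
  ext i k
  simp only [mul_apply, Matrix.neg_apply, one_apply, Fin.ext_iff, Jstd, Matrix.of_apply]
  rcases lt_or_ge i.val m with hi | hi
  · rw [Finset.sum_eq_single (⟨i.val + m, by omega⟩ : Fin (m + m))]
    · simp only [Fin.ext_iff]
      split_ifs <;> first | ring1 | (exfalso; omega)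
    · intro b _ hb
      have hb' : b.val ≠ i.val + m := fun h => hb (Fin.ext h)
      split_ifs <;> first | ring1 | (exfalso; omega)
    · intro h; exact absurd (Finset.mem_univ _) h
  · rw [Finset.sum_eq_single (⟨i.val - m, by omega⟩ : Fin (m + m))]
    · simp only [Fin.ext_iff]
      split_ifs <;> first | ring1 | (exfalso; omega)
    · intro b _ hb
      have hb' : b.val ≠ i.val - m := fun h => hb (Fin.ext h)
      split_ifs <;> first | ring1 | (exfalso; omega)
    · intro h; exact absurd (Finset.mem_univ _) h

lemma Jstd_T_mul_self (m : ℕ) : (Jstd m)ᵀ * Jstd m = 1 := by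
  rw [Jstd_transpose, neg_mul, Jstd_mul_self, neg_neg]

lemma clearDenom {V : Type*} (D : Polynomial ℝ) (v : ℝ → V → ℝ)
    (hv : ∀ i : V, (∃ g : Polynomial ℝ, ∀ t, v t i = g.eval t) ∨
      (∀ t, D.eval t ≠ 0 → v t i = (D.eval t)⁻¹))
    (r : MvPolynomial V ℝ) :
    ∃ (d : ℕ) (F : Polynomial ℝ), ∀ t, D.eval t ≠ 0 →
      F.eval t = (D.eval t) ^ d * MvPolynomial.eval (v t) r := by
  induction r using MvPolynomial.induction_on with
  | C a => exact ⟨0, Polynomial.C a, fun t ht => by simp⟩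
  | add p q hp hq =>
      obtain ⟨d₁, F₁, h₁⟩ := hp
      obtain ⟨d₂, F₂, h₂⟩ := hq
      refine ⟨d₁ + d₂, F₁ * D ^ d₂ + F₂ * D ^ d₁, fun t ht => ?_⟩
      simp only [Polynomial.eval_add, Polynomial.eval_mul, Polynomial.eval_pow,
        MvPolynomial.eval_add, h₁ t ht, h₂ t ht]
      ring
  | mul_X p i hp =>
      obtain ⟨d, F, hF⟩ := hp
      rcases hv i with ⟨g, hg⟩ | hi
      · refine ⟨d, F * g, fun t ht => ?_⟩
        simp only [Polynomial.eval_mul, MvPolynomial.eval_mul, MvPolynomial.eval_X,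
          hF t ht, ← hg t]
        ring
      · refine ⟨d + 1, F, fun t ht => ?_⟩
        rw [MvPolynomial.eval_mul, MvPolynomial.eval_X, hi t ht, hF t ht]
        field_simp
        ring

lemma posdef_shift {n : Type*} [Fintype n] [DecidableEq n]
    (h : Matrix n n ℝ) (hsymm : h.IsSymm) (t : ℝ)
    (ht : (∑ i, ∑ j, |h i j|) < t) : (h + t • 1).PosDef := by
  rw [posDef_iff_dotProduct_mulVec]; constructor
  · show (h + t • 1)ᴴ = _
    ext i j
    simp only [conjTranspose_apply, Matrix.add_apply, Matrix.smul_apply, one_apply, star_trivial,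
      smul_eq_mul, hsymm.apply, eq_comm (a := j) (b := i)]
  · intro x hx
    have hS : 0 < ∑ i, x i ^ 2 := by
      obtain ⟨i, hi⟩ := Function.ne_iff.mp hx
      exact Finset.sum_pos' (fun j _ => sq_nonneg _)
        ⟨i, Finset.mem_univ i, pow_two_pos_of_ne_zero (by simpa using hi)⟩
    set S := ∑ i, x i ^ 2 with hSdef
    have key : |∑ i, x i * (h *ᵥ x) i| ≤ (∑ i, ∑ j, |h i j|) * S := by
      calc |∑ i, x i * (h *ᵥ x) i| ≤ ∑ i, |x i * (h *ᵥ x) i| :=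
            Finset.abs_sum_le_sum_abs _ _
        _ ≤ ∑ i, ∑ j, |h i j| * S := by
            apply Finset.sum_le_sum
            intro i _
            calc |x i * (h *ᵥ x) i| = |∑ j, x i * (h i j * x j)| := by
                  rw [mulVec, dotProduct, Finset.mul_sum]
              _ ≤ ∑ j, |x i * (h i j * x j)| := Finset.abs_sum_le_sum_abs _ _
              _ ≤ ∑ j, |h i j| * S := by
                  apply Finset.sum_le_sum
                  intro j _
                  have h1 : x i ^ 2 ≤ S := Finset.single_le_sum
                    (fun k _ => sq_nonneg (x k)) (Finset.mem_univ i)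
                  have h2 : x j ^ 2 ≤ S := Finset.single_le_sum
                    (fun k _ => sq_nonneg (x k)) (Finset.mem_univ j)
                  have : |x i * (h i j * x j)| = |h i j| * (|x i| * |x j|) := by
                    rw [abs_mul, abs_mul]; ring
                  rw [this]
                  apply mul_le_mul_of_nonneg_left _ (abs_nonneg _)
                  nlinarith [abs_nonneg (x i), abs_nonneg (x j), sq_abs (x i), sq_abs (x j)]
        _ = (∑ i, ∑ j, |h i j|) * S := by
            rw [Finset.sum_mul]
            exact Finset.sum_congr rfl fun i _ => (Finset.sum_mul _ _ _).symm
    have expand : star x ⬝ᵥ ((h + t • 1) *ᵥ x) = (∑ i, x i * (h *ᵥ x) i) + t * S := by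
      have h1 : star x ⬝ᵥ ((h + t • 1) *ᵥ x) = x ⬝ᵥ (h *ᵥ x) + t * (x ⬝ᵥ x) := by
        rw [add_mulVec, smul_mulVec, one_mulVec, dotProduct_add, dotProduct_smul]
        simp [smul_eq_mul]
      have h2 : x ⬝ᵥ x = S := by
        rw [hSdef]; exact Finset.sum_congr rfl fun i _ => by ring
      rw [h1, h2]; rfl
    rw [expand]
    have habs := (abs_le.mp key).1
    nlinarith

/-- Let `P`, `Q` be polynomial functions in additional free real variables
`x`, the entries of a `J`-invariant symmetric bilinear form `h` on `ℝ^m`, and the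
auxiliary variable `det(h)⁻¹` (defined where `det h ≠ 0`).  If `P = Q` whenever `h` is
positive definite, then `P = Q` on the whole set where `det h ≠ 0`; in particular for `h`
of any nondegenerate signature. -/
theorem polynomial_identity_extends_to_indefinite (m N : ℕ)
    (P Q : (Fin N → ℝ) → Matrix (Fin (m + m)) (Fin (m + m)) ℝ → ℝ)
    (hP : ∃ p : MvPolynomial ((Fin N) ⊕ (Fin (m + m) × Fin (m + m)) ⊕ Unit) ℝ,
      ∀ x h, h.det ≠ 0 → P x h =
        MvPolynomial.eval (Sum.elim x (Sum.elim (fun ij => h ij.1 ij.2)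
          (fun _ => (h.det)⁻¹))) p)
    (hQ : ∃ q : MvPolynomial ((Fin N) ⊕ (Fin (m + m) × Fin (m + m)) ⊕ Unit) ℝ,
      ∀ x h, h.det ≠ 0 → Q x h =
        MvPolynomial.eval (Sum.elim x (Sum.elim (fun ij => h ij.1 ij.2)
          (fun _ => (h.det)⁻¹))) q)
    (heq : ∀ x (h : Matrix (Fin (m + m)) (Fin (m + m)) ℝ),
      h.IsSymm → (Jstd m)ᵀ * h * Jstd m = h → h.PosDef → P x h = Q x h) :
    ∀ x (h : Matrix (Fin (m + m)) (Fin (m + m)) ℝ),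
      h.IsSymm → (Jstd m)ᵀ * h * Jstd m = h → h.det ≠ 0 → P x h = Q x h := by
  obtain ⟨p, hp⟩ := hP
  obtain ⟨q, hq⟩ := hQ
  intro x h hsymm hJ hdet
  -- the deformed matrix and its determinant polynomial
  set M : ℝ → Matrix (Fin (m + m)) (Fin (m + m)) ℝ := fun t => h + t • 1 with hM
  set Dmat : Matrix (Fin (m + m)) (Fin (m + m)) (Polynomial ℝ) :=
    Matrix.of fun i j => Polynomial.C (h i j) + if i = j then Polynomial.X else 0 with hDmat
  set D : Polynomial ℝ := Dmat.det with hD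
  have hDeval : ∀ t, D.eval t = (M t).det := by
    intro t
    have : D.eval t = (Polynomial.evalRingHom t) Dmat.det := rfl
    rw [this, RingHom.map_det]
    congr 1
    ext i j
    simp [hDmat, hM, Matrix.add_apply, Matrix.smul_apply, Matrix.one_apply, apply_ite
      (Polynomial.eval t), mul_comm]
  have hM0 : M 0 = h := by simp [hM]
  -- the substitution
  set v : ℝ → ((Fin N) ⊕ (Fin (m + m) × Fin (m + m)) ⊕ Unit) → ℝ :=
    fun t => Sum.elim x (Sum.elim (fun ij => M t ij.1 ij.2) (fun _ => ((M t).det)⁻¹))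
    with hv
  have hvhyp : ∀ i, (∃ g : Polynomial ℝ, ∀ t, v t i = g.eval t) ∨
      (∀ t, D.eval t ≠ 0 → v t i = (D.eval t)⁻¹) := by
    rintro (n | ij | u)
    · exact Or.inl ⟨Polynomial.C (x n), fun t => by simp [hv]⟩
    · refine Or.inl ⟨Polynomial.C (h ij.1 ij.2) +
        if ij.1 = ij.2 then Polynomial.X else 0, fun t => ?_⟩
      simp [hv, hM, Matrix.add_apply, Matrix.smul_apply, Matrix.one_apply,
        apply_ite (Polynomial.eval t), mul_comm]
    · exact Or.inr fun t ht => by simp [hv, hDeval t]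
  obtain ⟨d₁, F₁, hF₁⟩ := clearDenom D v hvhyp p
  obtain ⟨d₂, F₂, hF₂⟩ := clearDenom D v hvhyp q
  set C₀ : ℝ := ∑ i, ∑ j, |h i j| with hC₀
  set F : Polynomial ℝ := F₁ * D ^ d₂ - F₂ * D ^ d₁ with hF
  -- F vanishes on (C₀, ∞)
  have hroot : ∀ t ∈ Set.Ioi C₀, F.IsRoot t := by
    intro t ht
    have hpos : (M t).PosDef := posdef_shift h hsymm t ht
    have hdet' : (M t).det ≠ 0 := ne_of_gt hpos.det_pos
    have hDt : D.eval t ≠ 0 := by rw [hDeval t]; exact hdet'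
    have hMsymm : (M t).IsSymm := by
      rw [hM]
      show (h + t • 1)ᵀ = h + t • 1
      rw [transpose_add, transpose_smul, transpose_one, hsymm]
    have hMJ : (Jstd m)ᵀ * M t * Jstd m = M t := by
      rw [hM]
      show (Jstd m)ᵀ * (h + t • 1) * Jstd m = h + t • 1
      rw [mul_add, add_mul, hJ, Matrix.mul_smul, Matrix.mul_one, Matrix.smul_mul,
        Jstd_T_mul_self]
    have hPQ : P x (M t) = Q x (M t) := heq x (M t) hMsymm hMJ hpos
    have hPv : P x (M t) = MvPolynomial.eval (v t) p := hp x (M t) hdet'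
    have hQv : Q x (M t) = MvPolynomial.eval (v t) q := hq x (M t) hdet'
    show F.eval t = 0
    rw [hF]
    simp only [Polynomial.eval_sub, Polynomial.eval_mul, Polynomial.eval_pow,
      hF₁ t hDt, hF₂ t hDt]
    rw [← hPv, ← hQv, hPQ]
    ring
  have hFzero : F = 0 :=
    Polynomial.eq_zero_of_infinite_isRoot F
      (Set.Infinite.mono (fun t ht => hroot t ht) (Set.Ioi_infinite C₀))
  -- evaluate at 0
  have hdet0 : (M 0).det ≠ 0 := by rw [hM0]; exact hdet
  have hD0 : D.eval 0 ≠ 0 := by rw [hDeval 0]; exact hdet0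
  have hv0 : (Sum.elim x (Sum.elim (fun ij => h ij.1 ij.2) (fun _ => (h.det)⁻¹)) :
      ((Fin N) ⊕ (Fin (m + m) × Fin (m + m)) ⊕ Unit) → ℝ) = v 0 := by
    funext i
    rcases i with n | ij | u <;> simp [hv, hM0]
  have hPv0 : P x h = MvPolynomial.eval (v 0) p := by rw [hp x h hdet, hv0]
  have hQv0 : Q x h = MvPolynomial.eval (v 0) q := by rw [hq x h hdet, hv0]
  have h0 : F.eval 0 = 0 := by rw [hFzero]; simp
  rw [hF] at h0
  simp only [Polynomial.eval_sub, Polynomial.eval_mul, Polynomial.eval_pow,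
    hF₁ 0 hD0, hF₂ 0 hD0] at h0
  rw [← hPv0, ← hQv0] at h0
  have hpow : (D.eval 0) ^ (d₁ + d₂) ≠ 0 := pow_ne_zero _ hD0
  have : (D.eval 0) ^ (d₁ + d₂) * (P x h - Q x h) = 0 := by
    rw [pow_add]; linear_combination h0
  have := mul_eq_zero.mp this
  rcases this with h' | h'
  · exact absurd h' hpow
  · linarith [sub_eq_zero.mp h']
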